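/- In the two-group Gaussian model, the variance ratio R = (σ̂₁²/N₁ + σ̂₀²/N₀) / (σ₁²/N₁ + σ₀²/N₀) converges to 1 in probability uniformly in the variances: for every e > 0 and d > 0 there exists M such that for all N₁ ≥ M, N₀ ≥ M and all σ₁² > 0, σ₀² > 0, P(|R − 1| > e) < d. -/

import Mathlib

open MeasureTheory ProbabilityTheory Filter Finset Topology NNReal

noncomputable section

/-- Sample mean of a finite family of reals. -/
def smean (n : ℕ) (f : Fin n → ℝ) : ℝ := (n : ℝ)⁻¹ * ∑ i, f i

/-- Sample variance (with divisor `n`) of a finite family of reals. -/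
def svar (n : ℕ) (f : Fin n → ℝ) : ℝ := (n : ℝ)⁻¹ * ∑ i, (f i - smean n f) ^ 2

/-- Variance ratio `R = (σ̂₁²/N₁ + σ̂₀²/N₀)/(σ₁²/N₁ + σ₀²/N₀)`. -/
def varRatio {N1 N0 : ℕ} {Ω : Type*} (v1 v0 : ℝ≥0)
    (ε : Fin N1 ⊕ Fin N0 → Ω → ℝ) (ω : Ω) : ℝ :=
  (svar N1 (fun i => ε (Sum.inl i) ω) / (N1 : ℝ) +
      svar N0 (fun i => ε (Sum.inr i) ω) / (N0 : ℝ)) /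
    ((v1 : ℝ) / (N1 : ℝ) + (v0 : ℝ) / (N0 : ℝ))

section aux
open Real
set_option linter.unusedVariables false
set_option linter.unusedSectionVars false

lemma integral_deriv_zero (f f' : ℝ → ℝ) (hderiv : ∀ x, HasDerivAt f (f' x) x)
    (hint : Integrable f') (htop : Tendsto f atTop (𝓝 0))
    (hbot : Tendsto f atBot (𝓝 0)) : ∫ x, f' x = 0 := by
  have h1 : ∫ x in Set.Ioi (0:ℝ), f' x = 0 - f 0 :=
    MeasureTheory.integral_Ioi_of_hasDerivAt_of_tendsto
      (hderiv 0).continuousAt.continuousWithinAt (fun x _ => hderiv x)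
      hint.integrableOn htop
  have h2 : ∫ x in Set.Iic (0:ℝ), f' x = f 0 - 0 :=
    MeasureTheory.integral_Iic_of_hasDerivAt_of_tendsto
      (hderiv 0).continuousAt.continuousWithinAt (fun x _ => hderiv x)
      hint.integrableOn hbot
  rw [← intervalIntegral.integral_Iic_add_Ioi (b := (0:ℝ)) hint.integrableOn hint.integrableOn, h1, h2]
  ring

section bmoments
variable {b : ℝ}

lemma tendsto_pow_exp_top (hb : 0 < b) (n : ℕ) :
    Tendsto (fun x : ℝ => x ^ n * exp (-b * x ^ 2)) atTop (𝓝 0) := by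
  have h := (rpow_mul_exp_neg_mul_sq_isLittleO_exp_neg hb (n : ℝ)).trans_tendsto
    (Real.tendsto_exp_atBot.comp (tendsto_id.const_mul_atTop_of_neg (by norm_num : (-(1/2):ℝ) < 0)))
  simpa [Real.rpow_natCast] using h

lemma tendsto_pow_exp_bot (hb : 0 < b) (n : ℕ) :
    Tendsto (fun x : ℝ => x ^ n * exp (-b * x ^ 2)) atBot (𝓝 0) := by
  have h := ((tendsto_pow_exp_top hb n).comp tendsto_neg_atBot_atTop).const_mul ((-1 : ℝ) ^ n)
  simp only [mul_zero] at h
  refine h.congr fun x => ?_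
  simp only [Function.comp]
  rw [neg_sq, ← mul_assoc, ← mul_pow]
  norm_num

lemma integrable_pow_exp (hb : 0 < b) (n : ℕ) :
    Integrable (fun x : ℝ => x ^ n * exp (-b * x ^ 2)) := by
  have h := integrable_rpow_mul_exp_neg_mul_sq hb (s := (n : ℝ)) (lt_of_lt_of_le (by norm_num) (Nat.cast_nonneg n))
  simpa [Real.rpow_natCast] using h

lemma integral_x2_exp (hb : 0 < b) :
    ∫ x : ℝ, x ^ 2 * exp (-b * x ^ 2) = √(π / b) / (2 * b) := by
  have hderiv : ∀ x : ℝ, HasDerivAt (fun x : ℝ => x * exp (-b * x ^ 2))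
      (exp (-b * x ^ 2) - 2 * b * (x ^ 2 * exp (-b * x ^ 2))) x := by
    intro x
    have h1 : HasDerivAt (fun x : ℝ => exp (-b * x ^ 2)) (exp (-b * x ^ 2) * (-b * (2 * x))) x := by
      have := ((hasDerivAt_pow 2 x).const_mul (-b)).exp
      simpa using this
    have := (hasDerivAt_id x).mul h1
    refine this.congr_deriv ?_
    simp
    try ring
  have hzero := integral_deriv_zero _ _ hderiv
    (((integrable_pow_exp hb 0).sub (((integrable_pow_exp hb 2).const_mul (2*b)))).congr
      (by filter_upwards with x; simp; try ring))
    (by simpa using tendsto_pow_exp_top hb 1) (by simpa using tendsto_pow_exp_bot hb 1)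
  rw [integral_sub (by simpa using integrable_pow_exp hb 0)
    ((integrable_pow_exp hb 2).const_mul (2*b)), integral_const_mul (2*b)] at hzero
  have h0 : ∫ x : ℝ, exp (-b * x ^ 2) = √(π / b) := integral_gaussian b
  rw [h0] at hzero
  field_simp at hzero ⊢
  linarith

lemma integral_x4_exp (hb : 0 < b) :
    ∫ x : ℝ, x ^ 4 * exp (-b * x ^ 2) = 3 * √(π / b) / (4 * b ^ 2) := by
  have hderiv : ∀ x : ℝ, HasDerivAt (fun x : ℝ => x ^ 3 * exp (-b * x ^ 2))
      (3 * (x ^ 2 * exp (-b * x ^ 2)) - 2 * b * (x ^ 4 * exp (-b * x ^ 2))) x := by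
    intro x
    have h1 : HasDerivAt (fun x : ℝ => exp (-b * x ^ 2)) (exp (-b * x ^ 2) * (-b * (2 * x))) x := by
      have := ((hasDerivAt_pow 2 x).const_mul (-b)).exp
      simpa using this
    have := (hasDerivAt_pow 3 x).mul h1
    refine this.congr_deriv ?_
    simp
    try ring
  have hzero := integral_deriv_zero _ _ hderiv
    ((((integrable_pow_exp hb 2).const_mul 3).sub
      (((integrable_pow_exp hb 4).const_mul (2*b)))).congr
      (by filter_upwards with x; simp; try ring))
    (by simpa using tendsto_pow_exp_top hb 3) (by simpa using tendsto_pow_exp_bot hb 3)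
  rw [integral_sub ((integrable_pow_exp hb 2).const_mul 3)
    ((integrable_pow_exp hb 4).const_mul (2*b)), integral_const_mul (2*b), integral_const_mul 3,
    integral_x2_exp hb] at hzero
  field_simp at hzero ⊢
  linarith

lemma integral_x1_exp (hb : 0 < b) :
    ∫ x : ℝ, x * exp (-b * x ^ 2) = 0 := by
  have hderiv : ∀ x : ℝ, HasDerivAt (fun x : ℝ => -(2*b)⁻¹ * exp (-b * x ^ 2))
      (x * exp (-b * x ^ 2)) x := by
    intro x
    have h1 : HasDerivAt (fun x : ℝ => exp (-b * x ^ 2)) (exp (-b * x ^ 2) * (-b * (2 * x))) x := by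
      have := ((hasDerivAt_pow 2 x).const_mul (-b)).exp
      simpa using this
    have := h1.const_mul (-(2*b)⁻¹)
    refine this.congr_deriv ?_
    field_simp
  have hzero := integral_deriv_zero _ _ hderiv
    (by simpa using integrable_pow_exp hb 1)
    (by
      have := (tendsto_pow_exp_top hb 0).const_mul (-(2*b)⁻¹)
      simpa using this)
    (by
      have := (tendsto_pow_exp_bot hb 0).const_mul (-(2*b)⁻¹)
      simpa using this)
  exact hzero

end bmoments

section gmoments
variable {v : ℝ≥0}

lemma gaussianReal_eq_withDensity (hv : v ≠ 0) :
    gaussianReal 0 v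
      = volume.withDensity (fun x => ((gaussianPDFReal 0 v x).toNNReal : ENNReal)) := by
  rw [gaussianReal_of_var_ne_zero 0 hv]
  rfl

lemma integral_fun_gaussianReal (hv : v ≠ 0) (g : ℝ → ℝ) :
    ∫ x, g x ∂(gaussianReal 0 v) = ∫ x, gaussianPDFReal 0 v x * g x := by
  rw [gaussianReal_eq_withDensity hv,
    integral_withDensity_eq_integral_smul
      ((measurable_gaussianPDFReal 0 v).real_toNNReal) g]
  refine integral_congr_ae (ae_of_all _ fun x => ?_)
  simp [NNReal.smul_def, Real.coe_toNNReal _ (gaussianPDFReal_nonneg 0 v x)]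

lemma integrable_fun_gaussianReal_iff (hv : v ≠ 0) (g : ℝ → ℝ) (hg : Measurable g) :
    Integrable g (gaussianReal 0 v)
      ↔ Integrable (fun x => g x * gaussianPDFReal 0 v x) := by
  rw [gaussianReal_eq_withDensity hv,
    integrable_withDensity_iff ((measurable_gaussianPDFReal 0 v).real_toNNReal.coe_nnreal_ennreal)
      (ae_of_all _ fun x => ENNReal.coe_lt_top)]
  refine integrable_congr (ae_of_all _ fun x => ?_)
  simp [Real.coe_toNNReal _ (gaussianPDFReal_nonneg 0 v x)]

lemma gaussianPDFReal_zero_eq (v : ℝ≥0) (x : ℝ) :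
    gaussianPDFReal 0 v x = (√(2 * π * v))⁻¹ * exp (-(2 * (v:ℝ))⁻¹ * x ^ 2) := by
  rw [gaussianPDFReal, sub_zero]
  congr 2
  ring

lemma b_pos (hv : v ≠ 0) : 0 < (2 * (v:ℝ))⁻¹ := by
  have hvpos : (0:ℝ) < v := by exact_mod_cast pos_iff_ne_zero.mpr hv
  positivity

lemma integrable_pow_gaussianReal (hv : v ≠ 0) (n : ℕ) :
    Integrable (fun x : ℝ => x ^ n) (gaussianReal 0 v) := by
  have hvpos : (0:ℝ) < v := by
    exact_mod_cast pos_iff_ne_zero.mpr hv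
  have hb : 0 < (2 * (v:ℝ))⁻¹ := by positivity
  rw [integrable_fun_gaussianReal_iff hv _ (measurable_id'.pow_const n)]
  have := ((integrable_pow_exp hb n).const_mul (√(2 * π * v))⁻¹)
  refine this.congr (ae_of_all _ fun x => ?_)
  simp only [gaussianPDFReal_zero_eq]
  ring

lemma integral_pow_gaussianReal_aux (hv : v ≠ 0) (n : ℕ) :
    ∫ x, x ^ n ∂(gaussianReal 0 v)
      = (√(2 * π * v))⁻¹ * ∫ x, x ^ n * exp (-(2 * (v:ℝ))⁻¹ * x ^ 2) := by
  rw [integral_fun_gaussianReal hv, ← integral_const_mul]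
  refine integral_congr_ae (ae_of_all _ fun x => ?_)
  simp only [gaussianPDFReal_zero_eq]
  ring

lemma sqrt_pi_div_eq (hv : v ≠ 0) :
    √(π / (2 * (v:ℝ))⁻¹) = √(2 * π * v) := by
  congr 1
  have hvpos : (0:ℝ) < v := by exact_mod_cast pos_iff_ne_zero.mpr hv
  field_simp
  try ring

lemma integral_id_gaussianReal (hv : v ≠ 0) : ∫ x, x ∂(gaussianReal 0 v) = 0 := by
  have h := integral_pow_gaussianReal_aux hv 1
  simp only [pow_one] at h
  rw [h, integral_x1_exp (b_pos hv), mul_zero]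

lemma integral_sq_gaussianReal (hv : v ≠ 0) : ∫ x, x ^ 2 ∂(gaussianReal 0 v) = v := by
  have hvpos : (0:ℝ) < v := by exact_mod_cast pos_iff_ne_zero.mpr hv
  rw [integral_pow_gaussianReal_aux hv 2, integral_x2_exp (b_pos hv), sqrt_pi_div_eq hv]
  have hs : √(2 * π * v) ≠ 0 := by positivity
  field_simp
  try ring

lemma integral_pow4_gaussianReal (hv : v ≠ 0) :
    ∫ x, x ^ 4 ∂(gaussianReal 0 v) = 3 * (v:ℝ) ^ 2 := by
  have hvpos : (0:ℝ) < v := by exact_mod_cast pos_iff_ne_zero.mpr hv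
  rw [integral_pow_gaussianReal_aux hv 4, integral_x4_exp (b_pos hv), sqrt_pi_div_eq hv]
  have hs : √(2 * π * v) ≠ 0 := by positivity
  field_simp
  try ring

end gmoments

section rv
variable {Ω : Type*} [MeasurableSpace Ω] {μ : Measure Ω} [IsProbabilityMeasure μ]
  {v : ℝ≥0} {X : Ω → ℝ}

lemma gauss_memL2 (hv : v ≠ 0) (hX : Measurable X)
    (hmap : μ.map X = gaussianReal 0 v) : MemLp X 2 μ := by
  have h1 : MemLp (id : ℝ → ℝ) 2 (gaussianReal 0 v) := by
    rw [memLp_two_iff_integrable_sq aestronglyMeasurable_id]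
    simpa using integrable_pow_gaussianReal hv 2
  have := (memLp_map_measure_iff aestronglyMeasurable_id hX.aemeasurable).mp (by rwa [hmap])
  simpa [Function.comp] using this

lemma gauss_sq_memL2 (hv : v ≠ 0) (hX : Measurable X)
    (hmap : μ.map X = gaussianReal 0 v) : MemLp (fun ω => X ω ^ 2) 2 μ := by
  rw [memLp_two_iff_integrable_sq ((hX.pow_const 2).aestronglyMeasurable)]
  have h4 : Integrable (fun x : ℝ => (x ^ 2) ^ 2) (gaussianReal 0 v) :=
    (integrable_pow_gaussianReal hv 4).congr (ae_of_all _ fun x => by ring)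
  have := (integrable_map_measure ((measurable_id'.pow_const 2).pow_const 2).aestronglyMeasurable
    hX.aemeasurable).mp (by rwa [hmap])
  simpa [Function.comp_def] using this

lemma gauss_integral (hv : v ≠ 0) (hX : Measurable X)
    (hmap : μ.map X = gaussianReal 0 v) : μ[X] = 0 := by
  have := integral_map (μ := μ) hX.aemeasurable (f := (id : ℝ → ℝ)) aestronglyMeasurable_id
  rw [hmap] at this
  simp only [id] at this
  rw [← this, integral_id_gaussianReal hv]

lemma gauss_integral_sq (hv : v ≠ 0) (hX : Measurable X)
    (hmap : μ.map X = gaussianReal 0 v) : μ[fun ω => X ω ^ 2] = (v:ℝ) := by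
  have := integral_map (μ := μ) hX.aemeasurable (f := fun x : ℝ => x ^ 2)
    (measurable_id'.pow_const 2).aestronglyMeasurable
  rw [hmap] at this
  rw [← this, integral_sq_gaussianReal hv]

lemma gauss_integral_pow4 (hv : v ≠ 0) (hX : Measurable X)
    (hmap : μ.map X = gaussianReal 0 v) : μ[fun ω => X ω ^ 4] = 3 * (v:ℝ) ^ 2 := by
  have := integral_map (μ := μ) hX.aemeasurable (f := fun x : ℝ => x ^ 4)
    (measurable_id'.pow_const 4).aestronglyMeasurable
  rw [hmap] at this
  rw [← this, integral_pow4_gaussianReal hv]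

lemma gauss_variance (hv : v ≠ 0) (hX : Measurable X)
    (hmap : μ.map X = gaussianReal 0 v) : variance X μ = v := by
  rw [variance_eq_sub (gauss_memL2 hv hX hmap)]
  have h1 : μ[X ^ 2] = (v:ℝ) := by
    have := gauss_integral_sq hv hX hmap
    simpa [Pi.pow_apply] using this
  rw [h1, gauss_integral hv hX hmap]
  ring

lemma gauss_variance_sq (hv : v ≠ 0) (hX : Measurable X)
    (hmap : μ.map X = gaussianReal 0 v) :
    variance (fun ω => X ω ^ 2) μ = 2 * (v:ℝ) ^ 2 := by
  rw [variance_eq_sub (gauss_sq_memL2 hv hX hmap)]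
  have h1 : μ[(fun ω => X ω ^ 2) ^ 2] = 3 * (v:ℝ) ^ 2 := by
    have := gauss_integral_pow4 hv hX hmap
    rw [← this]
    refine integral_congr_ae (ae_of_all _ fun ω => ?_)
    simp [Pi.pow_apply]
    ring
  rw [h1, gauss_integral_sq hv hX hmap]
  ring

end rv


lemma svar_eq (n : ℕ) (hn : 0 < n) (f : Fin n → ℝ) :
    svar n f = (n : ℝ)⁻¹ * ∑ i, f i ^ 2 - ((n : ℝ)⁻¹ * ∑ i, f i) ^ 2 := by
  have hn' : (n : ℝ) ≠ 0 := Nat.cast_ne_zero.mpr hn.ne'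
  have hexp : ∀ i : Fin n, (f i - smean n f) ^ 2
      = f i ^ 2 - 2 * smean n f * f i + smean n f ^ 2 := fun i => by ring
  rw [svar, Finset.sum_congr rfl (fun i _ => hexp i)]
  rw [Finset.sum_add_distrib, Finset.sum_sub_distrib, ← Finset.mul_sum,
    Finset.sum_const, Finset.card_univ, Fintype.card_fin, nsmul_eq_mul]
  rw [smean]
  field_simp
  ring

lemma group_bound {Ω : Type} [MeasurableSpace Ω] (μ : Measure Ω) [IsProbabilityMeasure μ]
    {N : ℕ} (hN : 0 < N) {v : ℝ≥0} (hv : v ≠ 0) (X : Fin N → Ω → ℝ)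
    (hmeas : ∀ i, Measurable (X i))
    (hpair : ∀ i j, i ≠ j → IndepFun (X i) (X j) μ)
    (hmap : ∀ i, μ.map (X i) = gaussianReal 0 v)
    {e : ℝ} (he : 0 < e) :
    μ {ω | e < |svar N (fun i => X i ω) / (v:ℝ) - 1|}
      ≤ ENNReal.ofReal (8 / (N * e ^ 2)) + ENNReal.ofReal (2 / (N * e)) := by
  have hvpos : (0:ℝ) < v := by exact_mod_cast pos_iff_ne_zero.mpr hv
  have hN' : (0:ℝ) < N := by exact_mod_cast hN
  set Y : Ω → ℝ := fun ω => ∑ i, X i ω ^ 2 with hYdef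
  set Z : Ω → ℝ := fun ω => ∑ i, X i ω with hZdef
  have hYm : MemLp Y 2 μ :=
    memLp_finset_sum _ fun i _ => gauss_sq_memL2 hv (hmeas i) (hmap i)
  have hZm : MemLp Z 2 μ :=
    memLp_finset_sum _ fun i _ => gauss_memL2 hv (hmeas i) (hmap i)
  have hEY : μ[Y] = (N:ℝ) * (v:ℝ) := by
    rw [hYdef, integral_finset_sum _
      (fun i _ => ((gauss_sq_memL2 hv (hmeas i) (hmap i)).integrable one_le_two))]
    rw [Finset.sum_congr rfl (fun i _ => gauss_integral_sq hv (hmeas i) (hmap i))]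
    simp [Finset.card_univ, mul_comm]
  have hEZ : μ[Z] = 0 := by
    rw [hZdef, integral_finset_sum _
      (fun i _ => ((gauss_memL2 hv (hmeas i) (hmap i)).integrable one_le_two))]
    rw [Finset.sum_congr rfl (fun i _ => gauss_integral hv (hmeas i) (hmap i))]
    simp
  have hVY : variance Y μ = (N:ℝ) * (2 * (v:ℝ) ^ 2) := by
    have hYsum : Y = ∑ i : Fin N, (fun ω => X i ω ^ 2) := by
      funext ω; simp [hYdef]
    rw [hYsum, IndepFun.variance_sum
      (fun i _ => gauss_sq_memL2 hv (hmeas i) (hmap i))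
      (fun i _ j _ hij => (hpair i j hij).comp
        (measurable_id'.pow_const 2) (measurable_id'.pow_const 2))]
    rw [Finset.sum_congr rfl (fun i _ => gauss_variance_sq hv (hmeas i) (hmap i))]
    simp [Finset.card_univ, mul_comm]
  have hVZ : variance Z μ = (N:ℝ) * (v:ℝ) := by
    have hZsum : Z = ∑ i : Fin N, X i := by
      funext ω; simp [hZdef]
    rw [hZsum, IndepFun.variance_sum
      (fun i _ => gauss_memL2 hv (hmeas i) (hmap i))
      (fun i _ j _ hij => hpair i j hij)]
    rw [Finset.sum_congr rfl (fun i _ => gauss_variance hv (hmeas i) (hmap i))]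
    simp [Finset.card_univ, mul_comm]
  have c1pos : 0 < (N:ℝ) * e * v / 2 := by positivity
  have hB := meas_ge_le_variance_div_sq hYm c1pos
  rw [hEY, hVY] at hB
  have hb1 : (N:ℝ) * (2 * (v:ℝ) ^ 2) / ((N:ℝ) * e * v / 2) ^ 2 = 8 / (N * e ^ 2) := by
    field_simp
    ring
  rw [hb1] at hB
  have c2pos : 0 < (N:ℝ) * √(e * v / 2) := by positivity
  have hC := meas_ge_le_variance_div_sq hZm c2pos
  rw [hEZ, hVZ] at hC
  have hb2 : (N:ℝ) * (v:ℝ) / ((N:ℝ) * √(e * v / 2)) ^ 2 = 2 / (N * e) := by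
    rw [mul_pow, Real.sq_sqrt (by positivity)]
    field_simp
  rw [hb2] at hC
  have hsub : {ω | e < |svar N (fun i => X i ω) / (v:ℝ) - 1|}
      ⊆ {ω | (N:ℝ) * e * v / 2 ≤ |Y ω - N * v|}
        ∪ {ω | (N:ℝ) * √(e * v / 2) ≤ |Z ω - 0|} := by
    intro ω hω
    by_contra hcon
    simp only [Set.mem_union, Set.mem_setOf_eq, not_or, not_le, sub_zero] at hcon
    obtain ⟨h1, h2⟩ := hcon
    simp only [Set.mem_setOf_eq] at hω
    have hsv : svar N (fun i => X i ω)
        = (N:ℝ)⁻¹ * Y ω - ((N:ℝ)⁻¹ * Z ω) ^ 2 := svar_eq N hN _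
    have hrat : svar N (fun i => X i ω) / (v:ℝ) - 1
        = (svar N (fun i => X i ω) - v) / v := by field_simp
    have hev : e * v < |svar N (fun i => X i ω) - (v:ℝ)| := by
      rw [hrat, abs_div, abs_of_pos hvpos] at hω
      calc e * v < |svar N (fun i => X i ω) - (v:ℝ)| / v * v := by
            exact (mul_lt_mul_iff_left₀ hvpos).mpr hω
        _ = |svar N (fun i => X i ω) - (v:ℝ)| := by field_simp
    have t1 : |(N:ℝ)⁻¹ * Y ω - v| < e * v / 2 := by
      have heq : (N:ℝ)⁻¹ * Y ω - v = (N:ℝ)⁻¹ * (Y ω - N * v) := by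
        field_simp
      rw [heq, abs_mul, abs_of_pos (inv_pos.mpr hN')]
      calc ((N:ℝ))⁻¹ * |Y ω - N * v| < ((N:ℝ))⁻¹ * ((N:ℝ) * e * v / 2) := by
            exact (mul_lt_mul_iff_right₀ (inv_pos.mpr hN')).mpr h1
        _ = e * v / 2 := by field_simp
    have t2 : ((N:ℝ)⁻¹ * Z ω) ^ 2 < e * v / 2 := by
      have hz : |(N:ℝ)⁻¹ * Z ω| < √(e * v / 2) := by
        rw [abs_mul, abs_of_pos (inv_pos.mpr hN')]
        calc ((N:ℝ))⁻¹ * |Z ω| < ((N:ℝ))⁻¹ * ((N:ℝ) * √(e * v / 2)) := by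
              exact (mul_lt_mul_iff_right₀ (inv_pos.mpr hN')).mpr h2
          _ = √(e * v / 2) := by field_simp
      have := mul_self_lt_mul_self (abs_nonneg _) hz
      rw [← sq_abs]
      nlinarith [Real.mul_self_sqrt (show (0:ℝ) ≤ e * v / 2 by positivity)]
    have htri : |svar N (fun i => X i ω) - (v:ℝ)|
        ≤ |(N:ℝ)⁻¹ * Y ω - v| + ((N:ℝ)⁻¹ * Z ω) ^ 2 := by
      have heq2 : svar N (fun i => X i ω) - (v:ℝ)
          = ((N:ℝ)⁻¹ * Y ω - v) - ((N:ℝ)⁻¹ * Z ω) ^ 2 := by rw [hsv]; ring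
      rw [heq2]
      calc |((N:ℝ)⁻¹ * Y ω - v) - ((N:ℝ)⁻¹ * Z ω) ^ 2|
          ≤ |(N:ℝ)⁻¹ * Y ω - v| + |((N:ℝ)⁻¹ * Z ω) ^ 2| := abs_sub _ _
        _ = |(N:ℝ)⁻¹ * Y ω - v| + ((N:ℝ)⁻¹ * Z ω) ^ 2 := by
            rw [abs_of_nonneg (sq_nonneg ((N:ℝ)⁻¹ * Z ω))]
    linarith
  calc μ {ω | e < |svar N (fun i => X i ω) / (v:ℝ) - 1|}
      ≤ μ ({ω | (N:ℝ) * e * v / 2 ≤ |Y ω - N * v|}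
        ∪ {ω | (N:ℝ) * √(e * v / 2) ≤ |Z ω - 0|}) := measure_mono hsub
    _ ≤ μ {ω | (N:ℝ) * e * v / 2 ≤ |Y ω - N * v|}
        + μ {ω | (N:ℝ) * √(e * v / 2) ≤ |Z ω - 0|} := measure_union_le _ _
    _ ≤ ENNReal.ofReal (8 / (N * e ^ 2)) + ENNReal.ofReal (2 / (N * e)) :=
        add_le_add hB hC

end aux

/-- In the two-group Gaussian model, the variance ratio `R` converges to `1` in
probability uniformly in the variances: for every `e > 0` and `d > 0` there is
`M` such that whenever `N₁, N₀ ≥ M` and `σ₁², σ₀² > 0`, `P(|R − 1| > e) < d`. -/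
theorem variance_ratio_uniformly_consistent (e d : ℝ) (he : 0 < e) (hd : 0 < d) :
    ∃ M : ℕ, ∀ (N1 N0 : ℕ), M ≤ N1 → M ≤ N0 →
      ∀ (v1 v0 : ℝ≥0), 0 < v1 → 0 < v0 →
      ∀ (Ω : Type) [MeasurableSpace Ω] (μ : Measure Ω) [IsProbabilityMeasure μ]
        (ε : Fin N1 ⊕ Fin N0 → Ω → ℝ),
        (∀ i, Measurable (ε i)) →
        iIndepFun ε μ →
        (∀ i : Fin N1, μ.map (ε (Sum.inl i)) = gaussianReal 0 v1) →
        (∀ i : Fin N0, μ.map (ε (Sum.inr i)) = gaussianReal 0 v0) →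
        (μ {ω | e < |varRatio v1 v0 ε ω - 1|}).toReal < d := by
  classical
  set q : ℝ := (16 / e ^ 2 + 4 / e) / d with hq
  refine ⟨⌈q⌉₊ + 1, ?_⟩
  intro N1 N0 hM1 hM0 v1 v0 hv1 hv0 Ω _ μ _ ε hmeas hindep hmap1 hmap0
  have hN1 : 0 < N1 := lt_of_lt_of_le (Nat.succ_pos _) hM1
  have hN0 : 0 < N0 := lt_of_lt_of_le (Nat.succ_pos _) hM0
  have hN1' : (0:ℝ) < N1 := by exact_mod_cast hN1
  have hN0' : (0:ℝ) < N0 := by exact_mod_cast hN0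
  have hv1' : (0:ℝ) < v1 := by exact_mod_cast hv1
  have hv0' : (0:ℝ) < v0 := by exact_mod_cast hv0
  have hpair1 : ∀ i j : Fin N1, i ≠ j → IndepFun (ε (Sum.inl i)) (ε (Sum.inl j)) μ :=
    fun i j hij => hindep.indepFun (by simpa using hij)
  have hpair0 : ∀ i j : Fin N0, i ≠ j → IndepFun (ε (Sum.inr i)) (ε (Sum.inr j)) μ :=
    fun i j hij => hindep.indepFun (by simpa using hij)
  have hG1 := group_bound μ hN1 (v := v1) hv1.ne' (fun i => ε (Sum.inl i))
    (fun i => hmeas _) hpair1 hmap1 he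
  have hG0 := group_bound μ hN0 (v := v0) hv0.ne' (fun i => ε (Sum.inr i))
    (fun i => hmeas _) hpair0 hmap0 he
  have hsub : {ω | e < |varRatio v1 v0 ε ω - 1|}
      ⊆ {ω | e < |svar N1 (fun i => ε (Sum.inl i) ω) / (v1:ℝ) - 1|}
        ∪ {ω | e < |svar N0 (fun i => ε (Sum.inr i) ω) / (v0:ℝ) - 1|} := by
    intro ω hω
    by_contra hcon
    simp only [Set.mem_union, Set.mem_setOf_eq, not_or, not_lt] at hcon
    obtain ⟨h1, h0⟩ := hcon
    simp only [Set.mem_setOf_eq] at hω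
    set s1 := svar N1 (fun i => ε (Sum.inl i) ω) with hs1
    set s0 := svar N0 (fun i => ε (Sum.inr i) ω) with hs0
    have hDpos : (0:ℝ) < (v1:ℝ)/(N1:ℝ) + (v0:ℝ)/(N0:ℝ) := by positivity
    set D : ℝ := (v1:ℝ)/(N1:ℝ) + (v0:ℝ)/(N0:ℝ) with hD
    have hid : varRatio v1 v0 ε ω - 1
        = ((v1:ℝ)/(N1:ℝ)/D) * (s1/(v1:ℝ) - 1)
          + ((v0:ℝ)/(N0:ℝ)/D) * (s0/(v0:ℝ) - 1) := by
      rw [varRatio, ← hs1, ← hs0, hD]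
      field_simp [hN1'.ne', hN0'.ne', hv1'.ne', hv0'.ne', hDpos.ne']
      ring
    have ha : 0 ≤ (v1:ℝ)/(N1:ℝ)/D := by positivity
    have hb : 0 ≤ (v0:ℝ)/(N0:ℝ)/D := by positivity
    have hab : (v1:ℝ)/(N1:ℝ)/D + (v0:ℝ)/(N0:ℝ)/D = 1 := by
      rw [hD]
      field_simp
    have hle : |varRatio v1 v0 ε ω - 1| ≤ e := by
      rw [hid]
      calc |((v1:ℝ)/(N1:ℝ)/D) * (s1/(v1:ℝ) - 1) + ((v0:ℝ)/(N0:ℝ)/D) * (s0/(v0:ℝ) - 1)|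
          ≤ |((v1:ℝ)/(N1:ℝ)/D) * (s1/(v1:ℝ) - 1)|
            + |((v0:ℝ)/(N0:ℝ)/D) * (s0/(v0:ℝ) - 1)| := abs_add_le _ _
        _ = ((v1:ℝ)/(N1:ℝ)/D) * |s1/(v1:ℝ) - 1| + ((v0:ℝ)/(N0:ℝ)/D) * |s0/(v0:ℝ) - 1| := by
            rw [abs_mul, abs_mul, abs_of_nonneg ha, abs_of_nonneg hb]
        _ ≤ ((v1:ℝ)/(N1:ℝ)/D) * e + ((v0:ℝ)/(N0:ℝ)/D) * e :=
            add_le_add (mul_le_mul_of_nonneg_left h1 ha) (mul_le_mul_of_nonneg_left h0 hb)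
        _ = e := by rw [← add_mul, hab, one_mul]
    linarith
  have hchain : μ {ω | e < |varRatio v1 v0 ε ω - 1|}
      ≤ ENNReal.ofReal (8/((N1:ℝ)*e^2) + 2/((N1:ℝ)*e) + (8/((N0:ℝ)*e^2) + 2/((N0:ℝ)*e))) := by
    calc μ {ω | e < |varRatio v1 v0 ε ω - 1|}
        ≤ μ ({ω | e < |svar N1 (fun i => ε (Sum.inl i) ω) / (v1:ℝ) - 1|}
          ∪ {ω | e < |svar N0 (fun i => ε (Sum.inr i) ω) / (v0:ℝ) - 1|}) := measure_mono hsub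
      _ ≤ μ {ω | e < |svar N1 (fun i => ε (Sum.inl i) ω) / (v1:ℝ) - 1|}
          + μ {ω | e < |svar N0 (fun i => ε (Sum.inr i) ω) / (v0:ℝ) - 1|} :=
          measure_union_le _ _
      _ ≤ (ENNReal.ofReal (8/((N1:ℝ)*e^2)) + ENNReal.ofReal (2/((N1:ℝ)*e)))
          + (ENNReal.ofReal (8/((N0:ℝ)*e^2)) + ENNReal.ofReal (2/((N0:ℝ)*e))) :=
          add_le_add hG1 hG0
      _ = ENNReal.ofReal (8/((N1:ℝ)*e^2) + 2/((N1:ℝ)*e) + (8/((N0:ℝ)*e^2) + 2/((N0:ℝ)*e))) := by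
          rw [← ENNReal.ofReal_add (by positivity) (by positivity),
            ← ENNReal.ofReal_add (by positivity) (by positivity),
            ← ENNReal.ofReal_add (by positivity) (by positivity)]
  have htoReal := ENNReal.toReal_le_of_le_ofReal (by positivity) hchain
  refine lt_of_le_of_lt htoReal ?_
  have key : ∀ n : ℕ, 0 < n → q < (n:ℝ) → 8/((n:ℝ)*e^2) + 2/((n:ℝ)*e) < d/2 := by
    intro n hn hqn
    have hn' : (0:ℝ) < n := by exact_mod_cast hn
    have hdq : d * q = 16/e^2 + 4/e := by
      rw [hq]; field_simp
    have hdn : 16/e^2 + 4/e < d * n := by nlinarith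
    have hsplit : 8/((n:ℝ)*e^2) + 2/((n:ℝ)*e) = (8/e^2 + 2/e)/(n:ℝ) := by
      field_simp
    rw [hsplit, div_lt_iff₀ hn']
    have h2 : 2 * (8 / e ^ 2 + 2 / e) = 16 / e ^ 2 + 4 / e := by ring
    linarith
  have hq1 : q < (N1:ℝ) := by
    have h1 : ((⌈q⌉₊ + 1 : ℕ):ℝ) ≤ (N1:ℝ) := by exact_mod_cast hM1
    have h2 : q ≤ (⌈q⌉₊ : ℝ) := Nat.le_ceil q
    push_cast at h1
    linarith
  have hq0 : q < (N0:ℝ) := by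
    have h1 : ((⌈q⌉₊ + 1 : ℕ):ℝ) ≤ (N0:ℝ) := by exact_mod_cast hM0
    have h2 : q ≤ (⌈q⌉₊ : ℝ) := Nat.le_ceil q
    push_cast at h1
    linarith
  have k1 := key N1 hN1 hq1
  have k0 := key N0 hN0 hq0
  linarith


end
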